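/- If a rational function F(t) has all its poles on the unit circle, agrees on the unit circle with a Laurent polynomial, and tends to 0 as |t| → ∞ and also as t → 0, then F is identically zero. -/

import Mathlib

open Complex Polynomial Finset Filter

/-- The unit circle in `ℂ` is an infinite set. -/
lemma aux_circle_infinite : Set.Infinite {t : ℂ | ‖t‖ = 1} := by
  have hmaps : Set.MapsTo (fun θ : ℝ => Complex.exp (θ * Complex.I))
      (Set.Ioo (0:ℝ) 1) {t : ℂ | ‖t‖ = 1} := by
    intro θ _
    simp [Complex.norm_exp_ofReal_mul_I θ]
  have hinj : Set.InjOn (fun θ : ℝ => Complex.exp (θ * Complex.I)) (Set.Ioo (0:ℝ) 1) := by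
    intro x hx y hy hxy
    have hx' : x ∈ Set.Icc (-(Real.pi/2)) (Real.pi/2) := by
      constructor <;> nlinarith [Real.pi_gt_three, hx.1, hx.2]
    have hy' : y ∈ Set.Icc (-(Real.pi/2)) (Real.pi/2) := by
      constructor <;> nlinarith [Real.pi_gt_three, hy.1, hy.2]
    have him : Real.sin x = Real.sin y := by
      have := congrArg Complex.im hxy
      simpa [Complex.exp_ofReal_mul_I_im] using this
    exact Real.injOn_sin hx' hy' him
  exact Set.Infinite.mono hmaps.image_subset ((Set.Ioo_infinite one_pos).image hinj)

/-- A rational function `F = P/Q` whose poles all lie on the unit circle,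
which agrees on the unit circle with a Laurent polynomial, and which tends to `0` as
`|t| → ∞` and as `t → 0`, is identically zero. -/
theorem rational_zero_of_laurent_on_circle_and_vanishing_limits
    (P Q : Polynomial ℂ) (hQ : Q ≠ 0)
    (hpoles : ∀ z : ℂ, ‖z‖ ≠ 1 → Q.eval z ≠ 0)
    (N : ℕ) (a : ℤ → ℂ)
    (hagree : ∀ t : ℂ, ‖t‖ = 1 → Q.eval t ≠ 0 →
      P.eval t / Q.eval t = ∑ n ∈ Finset.Icc (-(N : ℤ)) (N : ℤ), a n * t ^ n)
    (hinf : Tendsto (fun t : ℂ => P.eval t / Q.eval t)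
      (Filter.comap (fun z : ℂ => ‖z‖) Filter.atTop) (nhds 0))
    (hzero : Tendsto (fun t : ℂ => P.eval t / Q.eval t)
      (nhdsWithin (0 : ℂ) {(0 : ℂ)}ᶜ) (nhds 0)) :
    ∀ t : ℂ, t ≠ 0 → Q.eval t ≠ 0 → P.eval t / Q.eval t = 0 := by
  -- the Laurent polynomial, cleared of denominators
  set M : Polynomial ℂ := ∑ n ∈ Finset.Icc (-(N : ℤ)) (N : ℤ), C (a n) * X ^ (n + N).toNat
    with hM
  -- evaluation of M at nonzero t
  have hMeval : ∀ t : ℂ, t ≠ 0 →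
      M.eval t = (∑ n ∈ Finset.Icc (-(N : ℤ)) (N : ℤ), a n * t ^ n) * t ^ (N : ℕ) := by
    intro t ht
    rw [hM, eval_finset_sum, Finset.sum_mul]
    refine Finset.sum_congr rfl fun n hn => ?_
    have hn' : (0:ℤ) ≤ n + N := by
      have := (Finset.mem_Icc.mp hn).1; omega
    have h1 : (t : ℂ) ^ ((n + N).toNat) = t ^ ((n : ℤ) + N) := by
      rw [← zpow_natCast, Int.toNat_of_nonneg hn']
    simp only [eval_mul, eval_C, eval_pow, eval_X, h1, zpow_add₀ ht, zpow_natCast]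
    ring
  -- the key polynomial identity
  have hkey : X ^ (N : ℕ) * P = M * Q := by
    apply Polynomial.eq_of_infinite_eval_eq
    have hsub : {t : ℂ | ‖t‖ = 1} \ {t : ℂ | Q.IsRoot t} ⊆
        {x : ℂ | eval x (X ^ (N:ℕ) * P) = eval x (M * Q)} := by
      rintro t ⟨ht1, ht2⟩
      have hQt : Q.eval t ≠ 0 := ht2
      have ht0 : t ≠ 0 := by
        intro h; rw [h] at ht1; simp at ht1
      have := hagree t ht1 hQt
      have hPt : P.eval t = (∑ n ∈ Finset.Icc (-(N : ℤ)) (N : ℤ), a n * t ^ n) * Q.eval t := by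
        field_simp at this
        linear_combination this
      simp only [Set.mem_setOf_eq, eval_mul, eval_pow, eval_X, hPt, hMeval t ht0]
      ring
    exact Set.Infinite.mono hsub
      (aux_circle_infinite.diff (Polynomial.finite_setOf_isRoot hQ))
  -- divisibility: X^(N+1) ∣ M
  have hdvd : ∀ k : ℕ, k ≤ N + 1 → (X : Polynomial ℂ) ^ k ∣ M := by
    intro k hk
    induction k with
    | zero => simp
    | succ k ih =>
      obtain ⟨R, hR⟩ := ih (by omega)
      have hkN : k ≤ N := by omega
      -- R.eval tends to 0 at 0 along punctured nhds
      have hUlt : ∀ᶠ t : ℂ in nhdsWithin (0:ℂ) {(0:ℂ)}ᶜ, ‖t‖ < 1 := by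
        apply eventually_nhdsWithin_of_eventually_nhds
        have : ContinuousAt (fun z : ℂ => ‖z‖) 0 := continuous_norm.continuousAt
        have h := this.eventually_lt continuousAt_const (by simp : ‖(0:ℂ)‖ < 1)
        exact h
      have hne : ∀ᶠ t : ℂ in nhdsWithin (0:ℂ) {(0:ℂ)}ᶜ, t ≠ 0 :=
        eventually_mem_nhdsWithin
      have hEq : ∀ᶠ t : ℂ in nhdsWithin (0:ℂ) {(0:ℂ)}ᶜ,
          (P.eval t / Q.eval t) * t ^ (N - k) = R.eval t := by
        filter_upwards [hUlt, hne] with t hlt ht0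
        have hQt : Q.eval t ≠ 0 := hpoles t (by linarith)
        have h1 : t ^ (N:ℕ) * P.eval t = t ^ k * R.eval t * Q.eval t := by
          have := congrArg (Polynomial.eval t) hkey
          simpa [hR, eval_mul, eval_pow, mul_assoc] using this
        have h2 : t ^ (N:ℕ) = t ^ k * t ^ (N - k) := by
          rw [← pow_add]; congr 1; omega
        rw [h2] at h1
        have h3 : t ^ (N - k) * P.eval t = R.eval t * Q.eval t := by
          have htk : (t:ℂ) ^ k ≠ 0 := pow_ne_zero _ ht0
          apply mul_left_cancel₀ htk
          linear_combination h1
        field_simp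
        linear_combination h3
      have hlim : Tendsto (fun t : ℂ => (P.eval t / Q.eval t) * t ^ (N - k))
          (nhdsWithin (0:ℂ) {(0:ℂ)}ᶜ) (nhds 0) := by
        have hpow : Tendsto (fun t : ℂ => t ^ (N - k)) (nhdsWithin (0:ℂ) {(0:ℂ)}ᶜ)
            (nhds ((0:ℂ) ^ (N - k))) :=
          ((continuous_pow (N - k)).continuousAt (x := (0:ℂ))).continuousWithinAt
        simpa using hzero.mul hpow
      have hlimR : Tendsto (fun t : ℂ => R.eval t) (nhdsWithin (0:ℂ) {(0:ℂ)}ᶜ) (nhds 0) :=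
        hlim.congr' hEq
      have hcont : Tendsto (fun t : ℂ => R.eval t) (nhdsWithin (0:ℂ) {(0:ℂ)}ᶜ)
          (nhds (R.eval 0)) :=
        (R.continuous.continuousAt (x := (0:ℂ))).continuousWithinAt
      have hR0 : R.eval 0 = 0 := tendsto_nhds_unique hcont hlimR
      have : (X : Polynomial ℂ) ∣ R := by
        rw [Polynomial.X_dvd_iff, Polynomial.coeff_zero_eq_eval_zero, hR0]
      obtain ⟨S, hS⟩ := this
      exact ⟨S, by rw [hR, hS, pow_succ, mul_assoc]⟩
  obtain ⟨R, hRM⟩ := hdvd (N + 1) le_rfl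
  -- show R = 0 using the limit at infinity
  have hRzero : R = 0 := by
    by_contra hR0
    have hdeg : 0 < (X * R : Polynomial ℂ).degree := by
      have : (X * R : Polynomial ℂ).degree = 1 + R.degree := by
        rw [degree_mul, degree_X]
      rw [this]
      have h1 : (0:WithBot ℕ) ≤ R.degree := Polynomial.zero_le_degree_iff.mpr hR0
      calc (0 : WithBot ℕ) < 1 + 0 := by norm_num
        _ ≤ 1 + R.degree := by exact add_le_add_right h1 1
    -- along comap abs atTop, eventually abs t ≥ 2
    have hev : ∀ᶠ t : ℂ in Filter.comap (fun z : ℂ => ‖z‖) Filter.atTop, 2 ≤ ‖t‖ :=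
      eventually_comap.mpr (eventually_atTop.mpr ⟨2, fun b hb t ht => ht ▸ hb⟩)
    have hEq : ∀ᶠ t : ℂ in Filter.comap (fun z : ℂ => ‖z‖) Filter.atTop,
        P.eval t / Q.eval t = (X * R : Polynomial ℂ).eval t := by
      filter_upwards [hev] with t ht
      have ht0 : t ≠ 0 := by
        intro h; rw [h] at ht; simp at ht; linarith
      have hQt : Q.eval t ≠ 0 := hpoles t (by linarith)
      have h1 : t ^ (N:ℕ) * P.eval t = t ^ (N+1) * R.eval t * Q.eval t := by
        have := congrArg (Polynomial.eval t) hkey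
        simpa [hRM, eval_mul, eval_pow, mul_assoc] using this
      have h2 : (t:ℂ) ^ (N+1) = t ^ N * t := by ring
      rw [h2] at h1
      rw [eval_mul, eval_X, div_eq_iff hQt]
      have htN : (t:ℂ) ^ (N:ℕ) ≠ 0 := pow_ne_zero _ ht0
      apply mul_left_cancel₀ htN
      linear_combination h1
    have hlim : Tendsto (fun t : ℂ => (X * R : Polynomial ℂ).eval t)
        (Filter.comap (fun z : ℂ => ‖z‖) Filter.atTop) (nhds 0) := hinf.congr' hEq
    have hnormId : Tendsto (fun t : ℂ => ‖t‖) (Filter.comap (fun z : ℂ => ‖z‖) Filter.atTop)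
        Filter.atTop := by
      simpa using
        (tendsto_comap : Tendsto (fun z : ℂ => ‖z‖) (Filter.comap (fun z : ℂ => ‖z‖) Filter.atTop) Filter.atTop)
    have htop : Tendsto (fun t : ℂ => ‖(X * R : Polynomial ℂ).eval t‖)
        (Filter.comap (fun z : ℂ => ‖z‖) Filter.atTop) Filter.atTop :=
      Polynomial.tendsto_norm_atTop _ hdeg hnormId
    have hnb : (Filter.comap (fun z : ℂ => ‖z‖) Filter.atTop).NeBot := by
      have : Tendsto (fun n : ℕ => (n : ℂ)) Filter.atTop
          (Filter.comap (fun z : ℂ => ‖z‖) Filter.atTop) := by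
        rw [tendsto_comap_iff]
        have heq : ((fun z : ℂ => ‖z‖) ∘ fun n : ℕ => (n:ℂ)) = fun n : ℕ => (n:ℝ) := by
          funext n; simp
        rw [heq]
        exact tendsto_natCast_atTop_atTop
      exact Filter.neBot_of_le (f := Filter.map (fun n : ℕ => (n:ℂ)) Filter.atTop) this
    exact not_tendsto_atTop_of_tendsto_nhds (hlim.norm) htop
  have hM0 : M = 0 := by rw [hRM, hRzero, mul_zero]
  have hP0 : P = 0 := by
    have : X ^ (N:ℕ) * P = 0 := by rw [hkey, hM0, zero_mul]
    rcases mul_eq_zero.mp this with h | h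
    · exact absurd h (pow_ne_zero _ Polynomial.X_ne_zero)
    · exact h
  intro t _ _
  rw [hP0, eval_zero, zero_div]
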